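/- Let d ≥ 2 and let G = (V,E) be a finite simple graph with at least d+1 vertices. Then a(G, ℓ∞^d) ≤ a(G, ℓ∞^{d−1}). -/

import Mathlib

open scoped Classical
open Matrix

noncomputable section

/-- The list of eigenvalues (roots of the characteristic polynomial, with multiplicity)
of a real matrix, sorted in nondecreasing order. -/
def sortedEigs {m : Type*} [Fintype m] [DecidableEq m] (A : Matrix m m ℝ) : List ℝ :=
  A.charpoly.roots.sort (· ≤ ·)

/-- `eigval A j` is the `j`-th smallest eigenvalue `λ_j(A)` (1-based, with multiplicity). -/
def eigval {m : Type*} [Fintype m] [DecidableEq m] (A : Matrix m m ℝ) (j : ℕ) : ℝ :=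
  (sortedEigs A).getD (j - 1) 0

variable {V : Type*} [Fintype V] [DecidableEq V]

/-- `p` is an ℓ∞-framework position for `G` (i.e. `p ∈ W(G, ℓ∞^d)`): along each edge the
difference of the endpoints is nonzero and has a unique coordinate of maximal absolute
value. -/
def IsLinfPos {d : ℕ} (G : SimpleGraph V) (p : V → Fin d → ℝ) : Prop :=
  ∀ ⦃v w : V⦄, G.Adj v w → p v ≠ p w ∧
    ∃ i : Fin d, ∀ j : Fin d, j ≠ i → |p v j - p w j| < |p v i - p w i|

/-- The `i`-th monochrome subgraph of the framework `(G, p)` in `ℓ∞^d`: the spanning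
subgraph of `G` whose edges are those on which the `i`-th coordinate of the difference of
the endpoints has maximal absolute value. -/
def mono {d : ℕ} (G : SimpleGraph V) (p : V → Fin d → ℝ) (i : Fin d) : SimpleGraph V where
  Adj v w := G.Adj v w ∧ ∀ j : Fin d, |p v j - p w j| ≤ |p v i - p w i|
  symm := by
    constructor
    intro v w h
    refine ⟨h.1.symm, fun j => ?_⟩
    rw [abs_sub_comm (p w j), abs_sub_comm (p w i)]
    exact h.2 j
  loopless := ⟨fun v h => G.irrefl h.1⟩

/-- The rigidity matrix `R(G,p)` of a framework in `ℓ∞^d`, with rows indexed by edges and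
columns indexed by vertex-coordinate pairs: the row of an edge `vw ∈ E_i` has entry
`sgn((p v − p w) i)` in column `(v, i)`, entry `−sgn((p v − p w) i) = sgn((p w − p v) i)`
in column `(w, i)`, and zeros elsewhere. -/
def rigidity {d : ℕ} (G : SimpleGraph V) (p : V → Fin d → ℝ) :
    Matrix G.edgeSet (V × Fin d) ℝ := fun e vi =>
  if h : vi.1 ∈ (e : Sym2 V) then
    if (mono G p vi.2).Adj vi.1 (Sym2.Mem.other h) then
      Real.sign (p vi.1 vi.2 - p (Sym2.Mem.other h) vi.2)
    else 0
  else 0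

/-- The framework Laplacian `L(G,p) = R(G,p)ᵀ R(G,p)` of a framework in `ℓ∞^d`. -/
def fLap {d : ℕ} (G : SimpleGraph V) (p : V → Fin d → ℝ) :
    Matrix (V × Fin d) (V × Fin d) ℝ :=
  (rigidity G p)ᵀ * rigidity G p

/-- The algebraic connectivity (Fiedler number) `a(H) = λ₂(L(H))` of a finite simple
graph. -/
def algConn (H : SimpleGraph V) : ℝ := eigval (H.lapMatrix ℝ) 2

/-- The algebraic connectivity of `G` in `ℓ∞^d`:
`a(G, ℓ∞^d) = sup { λ_{d+1}(L(G,p)) : p ∈ W(G, ℓ∞^d) }`. -/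
def algConnLinf (d : ℕ) (G : SimpleGraph V) : ℝ :=
  sSup {t : ℝ | ∃ p : V → Fin d → ℝ, IsLinfPos G p ∧ t = eigval (fLap G p) (d + 1)}

end


open Polynomial

noncomputable section AuxA

/-- counting lemma, upper: if at least `k+1` elements are `< t`, the `k`-th entry is `< t`. -/
lemma sorted_getD_lt_of_le_countP {l : List ℝ} (hl : l.Pairwise (· ≤ ·)) {k : ℕ} {t : ℝ}
    (hk : k < l.length) (h : k + 1 ≤ l.countP (fun x => decide (x < t))) : l.getD k 0 < t := by
  induction l generalizing k with
  | nil => simp at hk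
  | cons a l ih =>
    rw [List.pairwise_cons] at hl
    rw [List.countP_cons] at h
    cases k with
    | zero =>
      by_cases hat : a < t
      · simpa using hat
      · have hat' : (decide (a < t)) = false := decide_eq_false hat
        rw [hat'] at h
        simp only [Bool.false_eq_true, if_false] at h
        have hpos : 0 < l.countP (fun x => decide (x < t)) := by omega
        obtain ⟨x, hx, hxt⟩ := List.countP_pos_iff.mp hpos
        simp only [decide_eq_true_eq] at hxt
        have := hl.1 x hx
        exact absurd (lt_of_le_of_lt this hxt) hat
    | succ k =>
      have h' : k + 1 ≤ l.countP (fun x => decide (x < t)) := by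
        by_cases hat : a < t <;> simp [hat] at h <;> omega
      have hk' : k < l.length := by simpa using hk
      simpa using ih hl.2 hk' h'

/-- counting lemma, lower: if the `k`-th entry is `< t` then at least `k+1` elements are `< t`. -/
lemma le_countP_of_sorted_getD_lt {l : List ℝ} (hl : l.Pairwise (· ≤ ·)) {k : ℕ} {t : ℝ}
    (hk : k < l.length) (h : l.getD k 0 < t) : k + 1 ≤ l.countP (fun x => decide (x < t)) := by
  induction l generalizing k with
  | nil => simp at hk
  | cons a l ih =>
    rw [List.pairwise_cons] at hl
    rw [List.countP_cons]
    cases k with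
    | zero =>
      simp only [List.getD_cons_zero] at h
      simp [h]
    | succ k =>
      have hk' : k < l.length := by simpa using hk
      have h' : l.getD k 0 < t := by simpa using h
      have hal : a < t := by
        have hmem : l.getD k 0 ∈ l := by
          rw [List.getD_eq_getElem l 0 hk']; exact List.getElem_mem _
        exact lt_of_le_of_lt (hl.1 _ hmem) h'
      have := ih hl.2 hk' h'
      simp [hal]; omega

end AuxA

noncomputable section AuxB
variable {m : Type*} [Fintype m] [DecidableEq m]

lemma charpoly_mul_conj (P A Q : Matrix m m ℝ) (h1 : P * Q = 1) :
    (P * A * Q).charpoly = A.charpoly := by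
  have hchar : charmatrix (P * A * Q) = C.mapMatrix P * charmatrix A * C.mapMatrix Q := by
    unfold charmatrix
    rw [Matrix.mul_sub, Matrix.sub_mul]
    congr 1
    · have : C.mapMatrix P * Matrix.scalar m (X : ℝ[X]) = Matrix.scalar m (X : ℝ[X]) * C.mapMatrix P :=
        (Matrix.scalar_commute (X : ℝ[X]) (fun r => Commute.all _ _) (C.mapMatrix P)).symm
      rw [this, Matrix.mul_assoc, ← _root_.map_mul C.mapMatrix P Q, h1]
      simp
    · rw [← _root_.map_mul C.mapMatrix P A, ← _root_.map_mul C.mapMatrix (P * A) Q]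
  have hdet : (C.mapMatrix P).det * (C.mapMatrix Q).det = 1 := by
    rw [← Matrix.det_mul, ← _root_.map_mul C.mapMatrix P Q, h1]
    simp
  unfold Matrix.charpoly
  rw [hchar, Matrix.det_mul, Matrix.det_mul]
  calc (C.mapMatrix P).det * (charmatrix A).det * (C.mapMatrix Q).det
      = (charmatrix A).det * ((C.mapMatrix P).det * (C.mapMatrix Q).det) := by ring
    _ = (charmatrix A).det := by rw [hdet, mul_one]

lemma charpoly_diagonal (v : m → ℝ) :
    (Matrix.diagonal v).charpoly = ∏ i, (X - C (v i)) := by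
  have : charmatrix (Matrix.diagonal v) = Matrix.diagonal (fun i => X - C (v i)) := by
    ext i j
    by_cases h : i = j
    · subst h; simp [charmatrix_apply_eq]
    · simp [charmatrix_apply_ne _ _ _ h, Matrix.diagonal_apply_ne _ h]
  rw [Matrix.charpoly, this, Matrix.det_diagonal]

/-- The multiset of charpoly roots of a real symmetric matrix is the multiset of its
eigenvalues. -/
lemma charpoly_eq_prod_eigenvalues {A : Matrix m m ℝ} (hA : A.IsHermitian) :
    A.charpoly = ∏ i, (X - C (hA.eigenvalues i)) := by
  have hU : (hA.eigenvectorUnitary : Matrix m m ℝ) * (star hA.eigenvectorUnitary : Matrix m m ℝ) = 1 := by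
    exact (Matrix.mem_unitaryGroup_iff).mp hA.eigenvectorUnitary.2
  have h1 : A.charpoly = (Matrix.diagonal (RCLike.ofReal ∘ hA.eigenvalues) : Matrix m m ℝ).charpoly := by
    conv_lhs => rw [hA.spectral_theorem]
    exact charpoly_mul_conj _ _ _ hU
  have h2 : (Matrix.diagonal (RCLike.ofReal ∘ hA.eigenvalues) : Matrix m m ℝ).charpoly
      = ∏ i, (X - C (hA.eigenvalues i)) := by
    rw [_root_.charpoly_diagonal]; simp
  rw [h1, h2]

lemma roots_charpoly_isHermitian {A : Matrix m m ℝ} (hA : A.IsHermitian) :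
    A.charpoly.roots = Finset.univ.val.map hA.eigenvalues := by
  rw [charpoly_eq_prod_eigenvalues hA]
  have h3 : (∏ i, (X - C (hA.eigenvalues i)))
      = ((Finset.univ.val.map hA.eigenvalues).map fun a => X - C a).prod := by
    rw [Multiset.map_map]
    rfl
  rw [h3, Polynomial.roots_multiset_prod_X_sub_C]

lemma card_roots_charpoly_isHermitian {A : Matrix m m ℝ} (hA : A.IsHermitian) :
    Multiset.card A.charpoly.roots = Fintype.card m := by
  rw [roots_charpoly_isHermitian hA]; simp

lemma roots_charpoly_nonneg {A : Matrix m m ℝ} (hA : A.PosSemidef) {x : ℝ}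
    (hx : x ∈ A.charpoly.roots) : 0 ≤ x := by
  rw [roots_charpoly_isHermitian hA.1] at hx
  obtain ⟨i, _, rfl⟩ := Multiset.mem_map.mp hx
  exact hA.eigenvalues_nonneg i

end AuxB

noncomputable section AuxC
variable {m : Type*} [Fintype m] [DecidableEq m]

lemma inner_eq_dot (x y : EuclideanSpace ℝ m) :
    (inner ℝ x y : ℝ) = (WithLp.equiv 2 (m → ℝ) x) ⬝ᵥ (WithLp.equiv 2 (m → ℝ) y) := by
  simp only [PiLp.inner_apply, RCLike.inner_apply, starRingEnd_apply, star_trivial, dotProduct]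
  exact Finset.sum_congr rfl fun i _ => mul_comm _ _

lemma quad_form_eigen {B : Matrix m m ℝ} (hB : B.IsHermitian) (x : EuclideanSpace ℝ m) :
    (inner ℝ x ((WithLp.equiv 2 (m → ℝ)).symm (B *ᵥ (WithLp.equiv 2 (m → ℝ)) x)) : ℝ)
      = ∑ i, hB.eigenvalues i * (hB.eigenvectorBasis.repr x i)^2 := by
  set c : m → ℝ := fun i => hB.eigenvectorBasis.repr x i with hc
  have hx : x = ∑ i, c i • hB.eigenvectorBasis i := (hB.eigenvectorBasis.sum_repr x).symm
  set L : EuclideanSpace ℝ m →ₗ[ℝ] EuclideanSpace ℝ m :=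
    ((WithLp.linearEquiv 2 ℝ (m → ℝ)).symm.toLinearMap.comp B.mulVecLin).comp
      (WithLp.linearEquiv 2 ℝ (m → ℝ)).toLinearMap with hL
  have hLb : ∀ j, L (hB.eigenvectorBasis j) = hB.eigenvalues j • hB.eigenvectorBasis j := by
    intro j
    simp only [hL, LinearMap.comp_apply, LinearEquiv.coe_toLinearMap, Matrix.mulVecLin_apply,
      WithLp.linearEquiv_apply, WithLp.linearEquiv_symm_apply]
    change WithLp.toLp 2 (B *ᵥ (hB.eigenvectorBasis j).ofLp) = _
    rw [hB.mulVec_eigenvectorBasis]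
    simp
  have key : (WithLp.equiv 2 (m → ℝ)).symm (B *ᵥ (WithLp.equiv 2 (m → ℝ)) x)
      = ∑ i, (hB.eigenvalues i * c i) • hB.eigenvectorBasis i := by
    have : (WithLp.equiv 2 (m → ℝ)).symm (B *ᵥ (WithLp.equiv 2 (m → ℝ)) x) = L x := by
      simp [hL]
    rw [this]
    conv_lhs => rw [hx]
    rw [map_sum]
    refine Finset.sum_congr rfl fun i _ => ?_
    rw [LinearMap.map_smul, hLb i, smul_smul, mul_comm]
  rw [key]
  conv_lhs => rw [hx]
  rw [hB.eigenvectorBasis.orthonormal.inner_sum]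
  refine Finset.sum_congr rfl fun i _ => ?_
  simp [starRingEnd_apply]
  ring

lemma inner_self_eigen {B : Matrix m m ℝ} (hB : B.IsHermitian) (x : EuclideanSpace ℝ m) :
    (inner ℝ x x : ℝ) = ∑ i, (hB.eigenvectorBasis.repr x i)^2 := by
  conv_lhs => rw [← hB.eigenvectorBasis.sum_repr x]
  rw [hB.eigenvectorBasis.orthonormal.inner_sum]
  refine Finset.sum_congr rfl fun i _ => ?_
  simp [starRingEnd_apply]
  ring

/-- Weyl-type monotonicity: if `B - A` is PSD, then `B` has at most as many eigenvalues
below any threshold as `A` does. -/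
lemma card_eigen_lt_mono {A B : Matrix m m ℝ} (hA : A.IsHermitian) (hB : B.IsHermitian)
    (hBA : (B - A).PosSemidef) (t : ℝ) :
    (Finset.univ.filter fun i => hB.eigenvalues i < t).card
      ≤ (Finset.univ.filter fun i => hA.eigenvalues i < t).card := by
  set SB := Finset.univ.filter fun i => hB.eigenvalues i < t with hSB
  set SA := Finset.univ.filter fun i => hA.eigenvalues i < t with hSA
  set SA' := Finset.univ.filter fun i => ¬ hA.eigenvalues i < t with hSA'
  set U : Submodule ℝ (EuclideanSpace ℝ m) :=
    Submodule.span ℝ (⇑hB.eigenvectorBasis '' ↑SB) with hU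
  set W : Submodule ℝ (EuclideanSpace ℝ m) :=
    Submodule.span ℝ (⇑hA.eigenvectorBasis '' ↑SA') with hW
  have hquadle : ∀ x : EuclideanSpace ℝ m,
      (inner ℝ x ((WithLp.equiv 2 (m → ℝ)).symm (A *ᵥ (WithLp.equiv 2 (m → ℝ)) x)) : ℝ)
      ≤ (inner ℝ x ((WithLp.equiv 2 (m → ℝ)).symm (B *ᵥ (WithLp.equiv 2 (m → ℝ)) x)) : ℝ) := by
    intro x
    have h0 := hBA.dotProduct_mulVec_nonneg (WithLp.equiv 2 (m → ℝ) x)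
    rw [star_trivial, sub_mulVec, dotProduct_sub] at h0
    have e1 := inner_eq_dot x ((WithLp.equiv 2 (m → ℝ)).symm (A *ᵥ (WithLp.equiv 2 (m → ℝ)) x))
    have e2 := inner_eq_dot x ((WithLp.equiv 2 (m → ℝ)).symm (B *ᵥ (WithLp.equiv 2 (m → ℝ)) x))
    rw [Equiv.apply_symm_apply] at e1 e2
    rw [e1, e2]
    linarith
  have hUW : U ⊓ W = ⊥ := by
    rw [Submodule.eq_bot_iff]
    rintro x ⟨hxU, hxW⟩
    by_contra hx0
    have hcB : ↑(hB.eigenvectorBasis.toBasis.repr x).support ⊆ (SB : Set m) := by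
      rw [hU, ← hB.eigenvectorBasis.coe_toBasis] at hxU
      exact (Module.Basis.mem_span_image _).mp hxU
    have hcA : ↑(hA.eigenvectorBasis.toBasis.repr x).support ⊆ (SA' : Set m) := by
      rw [hW, ← hA.eigenvectorBasis.coe_toBasis] at hxW
      exact (Module.Basis.mem_span_image _).mp hxW
    -- B-quadratic form is < t ⟪x,x⟫
    have hBlt : (inner ℝ x ((WithLp.equiv 2 (m → ℝ)).symm (B *ᵥ (WithLp.equiv 2 (m → ℝ)) x)) : ℝ)
        < t * (inner ℝ x x : ℝ) := by
      rw [quad_form_eigen hB, inner_self_eigen hB, Finset.mul_sum]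
      apply Finset.sum_lt_sum
      · intro i _
        by_cases hci : hB.eigenvectorBasis.repr x i = 0
        · simp [hci]
        · have hiS : i ∈ SB := by
            have : i ∈ (hB.eigenvectorBasis.toBasis.repr x).support := by
              simp [Finsupp.mem_support_iff, hB.eigenvectorBasis.coe_toBasis_repr_apply, hci]
            exact hcB this
          have : hB.eigenvalues i < t := by
            simpa [hSB] using hiS
          nlinarith [sq_nonneg (hB.eigenvectorBasis.repr x i)]
      · have : ∃ i, hB.eigenvectorBasis.repr x i ≠ 0 := by
          by_contra hall
          push_neg at hall
          apply hx0
          rw [← hB.eigenvectorBasis.sum_repr x]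
          simp [hall]
        obtain ⟨i, hi⟩ := this
        refine ⟨i, Finset.mem_univ i, ?_⟩
        have hiS : i ∈ SB := by
          have : i ∈ (hB.eigenvectorBasis.toBasis.repr x).support := by
            simp [Finsupp.mem_support_iff, hB.eigenvectorBasis.coe_toBasis_repr_apply, hi]
          exact hcB this
        have hlt : hB.eigenvalues i < t := by simpa [hSB] using hiS
        have : 0 < (hB.eigenvectorBasis.repr x i)^2 := by positivity
        nlinarith
    -- A-quadratic form is ≥ t ⟪x,x⟫
    have hAge : t * (inner ℝ x x : ℝ)
        ≤ (inner ℝ x ((WithLp.equiv 2 (m → ℝ)).symm (A *ᵥ (WithLp.equiv 2 (m → ℝ)) x)) : ℝ) := by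
      rw [quad_form_eigen hA, inner_self_eigen hA, Finset.mul_sum]
      apply Finset.sum_le_sum
      intro i _
      by_cases hci : hA.eigenvectorBasis.repr x i = 0
      · simp [hci]
      · have hiS : i ∈ SA' := by
          have : i ∈ (hA.eigenvectorBasis.toBasis.repr x).support := by
            simp [Finsupp.mem_support_iff, hA.eigenvectorBasis.coe_toBasis_repr_apply, hci]
          exact hcA this
        have : t ≤ hA.eigenvalues i := by simpa [hSA'] using hiS
        nlinarith [sq_nonneg (hA.eigenvectorBasis.repr x i)]
    linarith [hquadle x]
  -- dimension count
  have hrankU : Module.finrank ℝ U = SB.card := by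
    rw [hU, Set.image_eq_range]
    have hli : LinearIndependent ℝ (fun i : (SB : Set m) => hB.eigenvectorBasis i) :=
      (hB.eigenvectorBasis.orthonormal.linearIndependent).comp Subtype.val Subtype.val_injective
    rw [finrank_span_eq_card hli]
    simp
  have hrankW : Module.finrank ℝ W = SA'.card := by
    rw [hW, Set.image_eq_range]
    have hli : LinearIndependent ℝ (fun i : (SA' : Set m) => hA.eigenvectorBasis i) :=
      (hA.eigenvectorBasis.orthonormal.linearIndependent).comp Subtype.val Subtype.val_injective
    rw [finrank_span_eq_card hli]
    simp
  have hsum : Module.finrank ℝ U + Module.finrank ℝ W ≤ Fintype.card m := by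
    have h1 := Submodule.finrank_sup_add_finrank_inf_eq U W
    rw [hUW] at h1
    simp only [finrank_bot, add_zero] at h1
    have h2 : Module.finrank ℝ ↥(U ⊔ W) ≤ Fintype.card m := by
      have := Submodule.finrank_le (U ⊔ W)
      rwa [finrank_euclideanSpace] at this
    omega
  have hcards : SA.card + SA'.card = Fintype.card m := by
    rw [hSA, hSA']
    rw [Finset.card_filter_add_card_filter_not]
    simp
  rw [hrankU, hrankW] at hsum
  omega

end AuxC

noncomputable section AuxE
set_option linter.unusedSectionVars false

variable {n : Type*} [Fintype n] [DecidableEq n] {o : Type*} [Fintype o] [DecidableEq o]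

lemma charmatrix_blockDiagonal (M : o → Matrix n n ℝ) :
    charmatrix (Matrix.blockDiagonal M)
      = Matrix.blockDiagonal (fun k => charmatrix (M k)) := by
  ext ⟨a, k⟩ ⟨b, l⟩
  by_cases hkl : k = l
  · subst hkl
    by_cases hab : a = b
    · subst hab
      rw [charmatrix_apply_eq, Matrix.blockDiagonal_apply_eq, Matrix.blockDiagonal_apply_eq,
        charmatrix_apply_eq]
    · have hne : (a, k) ≠ (b, k) := fun h => hab (congrArg Prod.fst h)
      rw [charmatrix_apply_ne _ _ _ hne, Matrix.blockDiagonal_apply_eq,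
        Matrix.blockDiagonal_apply_eq, charmatrix_apply_ne _ _ _ hab]
  · have hne : (a, k) ≠ (b, l) := fun h => hkl (congrArg Prod.snd h)
    rw [charmatrix_apply_ne _ _ _ hne, Matrix.blockDiagonal_apply_ne _ _ _ hkl,
      Matrix.blockDiagonal_apply_ne _ _ _ hkl]
    simp

lemma charpoly_blockDiagonal (M : o → Matrix n n ℝ) :
    (Matrix.blockDiagonal M).charpoly = ∏ k, (M k).charpoly := by
  unfold Matrix.charpoly
  rw [charmatrix_blockDiagonal, Matrix.det_blockDiagonal]

lemma roots_blockDiagonal (M : o → Matrix n n ℝ) :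
    (Matrix.blockDiagonal M).charpoly.roots = ∑ k, (M k).charpoly.roots := by
  rw [charpoly_blockDiagonal]
  rw [Polynomial.roots_prod _ _ (by
    apply Finset.prod_ne_zero_iff.mpr
    intro k _
    exact (Matrix.charpoly_monic (M k)).ne_zero)]
  -- univ.val.bind = ∑
  induction (Finset.univ : Finset o) using Finset.cons_induction with
  | empty => simp
  | cons a s ha ih => rw [Finset.cons_eq_insert, Finset.sum_insert ha, ← ih]
                      simp [Finset.insert_val, Multiset.ndinsert_of_notMem ha]

lemma countP_finsetSum {ι : Type*} (s : Finset ι) (f : ι → Multiset ℝ) (pr : ℝ → Prop) :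
    Multiset.countP pr (∑ i ∈ s, f i) = ∑ i ∈ s, Multiset.countP pr (f i) := by
  induction s using Finset.cons_induction with
  | empty => simp
  | cons a s ha ih => rw [Finset.sum_cons, Finset.sum_cons, Multiset.countP_add, ih]

end AuxE
noncomputable section AuxD
open Polynomial
variable {V : Type*} [Fintype V] [DecidableEq V]

namespace AuxD

variable {d : ℕ} {G : SimpleGraph V} {p : V → Fin d → ℝ}

/-- uniqueness of the monochrome class of an edge -/
lemma mono_unique (hp : IsLinfPos G p) {i j : Fin d} {v w : V}
    (hi : (mono G p i).Adj v w) (hj : (mono G p j).Adj v w) : i = j := by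
  obtain ⟨hne, i₀, hi₀⟩ := hp hi.1
  have hii : i = i₀ := by
    by_contra h
    exact absurd (hi.2 i₀) (not_le.mpr (hi₀ i h))
  have hjj : j = i₀ := by
    by_contra h
    exact absurd (hj.2 i₀) (not_le.mpr (hi₀ j h))
  rw [hii, hjj]

lemma mono_sub_ne (hp : IsLinfPos G p) {i : Fin d} {v w : V}
    (hi : (mono G p i).Adj v w) : p v i - p w i ≠ 0 := by
  intro h0
  obtain ⟨hne, _, _⟩ := hp hi.1
  apply hne
  funext j
  have := hi.2 j
  rw [h0] at this
  simp only [abs_zero] at this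
  have : |p v j - p w j| = 0 := le_antisymm this (abs_nonneg _)
  have := abs_eq_zero.mp this
  linarith [sub_eq_zero.mp this]
  
lemma rig_apply (v w : V) (hvw : G.Adj v w) (i : Fin d) (he : s(v,w) ∈ G.edgeSet) :
    rigidity G p ⟨s(v,w), he⟩ (v, i)
      = if (mono G p i).Adj v w then Real.sign (p v i - p w i) else 0 := by
  have hv : v ∈ (⟨s(v,w), he⟩ : G.edgeSet).1 := Sym2.mem_mk_left v w
  have hother : Sym2.Mem.other hv = w := by
    have := Sym2.other_spec hv
    exact (Sym2.congr_right.mp this)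
  rw [rigidity]
  rw [dif_pos hv]
  rw [hother]

end AuxD
end AuxD

noncomputable section AuxD2
set_option linter.unusedSectionVars false
open Polynomial
variable {V : Type*} [Fintype V] [DecidableEq V]

namespace AuxD2
open AuxD

lemma sign_mul_self {x : ℝ} (hx : x ≠ 0) : Real.sign x * Real.sign x = 1 := by
  rcases lt_trichotomy x 0 with h | h | h
  · rw [Real.sign_of_neg h]; norm_num
  · exact absurd h hx
  · rw [Real.sign_of_pos h]; norm_num

lemma sign_mul_sign_neg {x : ℝ} (hx : x ≠ 0) : Real.sign x * Real.sign (-x) = -1 := by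
  rcases lt_trichotomy x 0 with h | h | h
  · rw [Real.sign_of_neg h, Real.sign_of_pos (by linarith)]; norm_num
  · exact absurd h hx
  · rw [Real.sign_of_pos h, Real.sign_of_neg (by linarith)]; norm_num

variable {d : ℕ} {G : SimpleGraph V} {p : V → Fin d → ℝ}

lemma rig_ne_zero {e : G.edgeSet} {v : V} {i : Fin d} (h : rigidity G p e (v,i) ≠ 0) :
    ∃ w, (e : Sym2 V) = s(v,w) ∧ (mono G p i).Adj v w := by
  rw [rigidity] at h
  by_cases hv : v ∈ (e : Sym2 V)
  · rw [dif_pos hv] at h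
    by_cases hadj : (mono G p i).Adj v (Sym2.Mem.other hv)
    · exact ⟨Sym2.Mem.other hv, (Sym2.other_spec hv).symm, hadj⟩
    · rw [if_neg hadj] at h; exact absurd rfl h
  · rw [dif_neg hv] at h; exact absurd rfl h

lemma fLap_eq_blockDiagonal (hp : IsLinfPos G p) :
    fLap G p = Matrix.blockDiagonal (fun i => (mono G p i).lapMatrix ℝ) := by
  ext ⟨v,i⟩ ⟨w,j⟩
  rw [fLap, Matrix.mul_apply]
  simp only [Matrix.transpose_apply]
  by_cases hvw : v = w
  · subst hvw
    by_cases hij : i = j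
    · subst hij
      -- diagonal entry: degree
      have hterm : ∀ e : G.edgeSet, rigidity G p e (v,i) * rigidity G p e (v,i)
          = if (∃ w, (e : Sym2 V) = s(v,w) ∧ (mono G p i).Adj v w) then (1:ℝ) else 0 := by
        intro e
        by_cases hP : ∃ w, (e : Sym2 V) = s(v,w) ∧ (mono G p i).Adj v w
        · obtain ⟨w, hw, hadj⟩ := hP
          rw [if_pos ⟨w, hw, hadj⟩]
          have he' : s(v,w) ∈ G.edgeSet := hw ▸ e.2
          have : e = ⟨s(v,w), he'⟩ := Subtype.ext hw
          rw [this, rig_apply v w hadj.1 i he', if_pos hadj]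
          exact sign_mul_self (mono_sub_ne hp hadj)
        · rw [if_neg hP]
          by_contra h
          have hne : rigidity G p e (v,i) ≠ 0 := by
            intro h0; exact h (by rw [h0]; ring)
          exact hP (rig_ne_zero hne)
      rw [Finset.sum_congr rfl (fun e _ => hterm e), Finset.sum_boole]
      have hcard : (Finset.univ.filter
            (fun e : G.edgeSet => ∃ w, (e : Sym2 V) = s(v,w) ∧ (mono G p i).Adj v w)).card
          = (mono G p i).degree v := by
        rw [← SimpleGraph.card_neighborFinset_eq_degree]
        symm
        apply Finset.card_bij
          (i := fun (w : V) (hw : w ∈ (mono G p i).neighborFinset v) =>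
            (⟨s(v,w), ((SimpleGraph.mem_neighborFinset _ _ _).mp hw).1⟩ : G.edgeSet))
        · intro w hw
          simp only [Finset.mem_filter, Finset.mem_univ, true_and]
          exact ⟨w, rfl, (SimpleGraph.mem_neighborFinset _ _ _).mp hw⟩
        · intro w1 h1 w2 h2 heq
          have := Subtype.ext_iff.mp heq
          exact Sym2.congr_right.mp this
        · intro e he
          simp only [Finset.mem_filter, Finset.mem_univ, true_and] at he
          obtain ⟨w, hw, hadj⟩ := he
          exact ⟨w, (SimpleGraph.mem_neighborFinset _ _ _).mpr hadj, Subtype.ext hw.symm⟩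
      rw [hcard]
      simp [Matrix.blockDiagonal_apply, SimpleGraph.lapMatrix, SimpleGraph.degMatrix,
        SimpleGraph.adjMatrix]
    · -- same vertex, different coordinates: zero
      have hterm : ∀ e : G.edgeSet, rigidity G p e (v,i) * rigidity G p e (v,j) = 0 := by
        intro e
        by_contra h
        have h1 : rigidity G p e (v,i) ≠ 0 := fun h0 => h (by rw [h0]; ring)
        have h2 : rigidity G p e (v,j) ≠ 0 := fun h0 => h (by rw [h0]; ring)
        obtain ⟨w1, hw1, hadj1⟩ := rig_ne_zero h1
        obtain ⟨w2, hw2, hadj2⟩ := rig_ne_zero h2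
        have : w1 = w2 := Sym2.congr_right.mp (hw1 ▸ hw2)
        exact hij (mono_unique hp hadj1 (this ▸ hadj2))
      rw [Finset.sum_congr rfl (fun e _ => hterm e)]
      simp [Matrix.blockDiagonal_apply, hij]
  · -- distinct vertices
    have hterm : ∀ e : G.edgeSet, rigidity G p e (v,i) * rigidity G p e (w,j)
        = if ((e : Sym2 V) = s(v,w) ∧ i = j ∧ (mono G p i).Adj v w) then (-1:ℝ) else 0 := by
      intro e
      by_cases hC : (e : Sym2 V) = s(v,w) ∧ i = j ∧ (mono G p i).Adj v w
      · obtain ⟨h1, hij, hadj⟩ := hC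
        subst hij
        rw [if_pos ⟨h1, rfl, hadj⟩]
        have he' : s(v,w) ∈ G.edgeSet := h1 ▸ e.2
        have he'' : s(w,v) ∈ G.edgeSet := Sym2.eq_swap ▸ he'
        have hee : e = ⟨s(v,w), he'⟩ := Subtype.ext h1
        have hee2 : (⟨s(v,w), he'⟩ : G.edgeSet) = ⟨s(w,v), he''⟩ := Subtype.ext Sym2.eq_swap.symm
        rw [hee, rig_apply v w hadj.1 i he']
        rw [if_pos hadj]
        rw [hee2, rig_apply w v hadj.1.symm i he'']
        rw [if_pos hadj.symm]
        have : p w i - p v i = -(p v i - p w i) := by ring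
        rw [this]
        exact sign_mul_sign_neg (mono_sub_ne hp hadj)
      · rw [if_neg hC]
        by_contra h
        have h1 : rigidity G p e (v,i) ≠ 0 := fun h0 => h (by rw [h0]; ring)
        have h2 : rigidity G p e (w,j) ≠ 0 := fun h0 => h (by rw [h0]; ring)
        obtain ⟨w1, hw1, hadj1⟩ := rig_ne_zero h1
        obtain ⟨w2, hw2, hadj2⟩ := rig_ne_zero h2
        -- w ∈ e = s(v,w1), w ≠ v so w = w1
        have hwmem : w ∈ (e : Sym2 V) := by rw [hw2]; exact Sym2.mem_mk_left _ _
        rw [hw1] at hwmem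
        have hww1 : w = w1 := by
          rcases Sym2.mem_iff.mp hwmem with h' | h'
          · exact absurd h'.symm hvw
          · exact h'
        have hvmem : v ∈ (e : Sym2 V) := by rw [hw1]; exact Sym2.mem_mk_left _ _
        rw [hw2] at hvmem
        have hvw2 : v = w2 := by
          rcases Sym2.mem_iff.mp hvmem with h' | h'
          · exact absurd h' hvw
          · exact h'
        subst hww1
        have hadj2' : (mono G p j).Adj v w := by
          rw [← hvw2] at hadj2
          exact hadj2.symm
        have hij : i = j := mono_unique hp hadj1 hadj2'
        exact hC ⟨hw1, hij, hadj1⟩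
    rw [Finset.sum_congr rfl (fun e _ => hterm e)]
    by_cases hij : i = j
    · subst hij
      by_cases hadj : (mono G p i).Adj v w
      · have he : s(v,w) ∈ G.edgeSet := hadj.1
        have : ∀ e : G.edgeSet,
            (if ((e : Sym2 V) = s(v,w) ∧ i = i ∧ (mono G p i).Adj v w) then (-1:ℝ) else 0)
            = if e = (⟨s(v,w), he⟩ : G.edgeSet) then (-1:ℝ) else 0 := by
          intro e
          congr 1
          simp only [eq_iff_iff]
          constructor
          · rintro ⟨h1, -, -⟩; exact Subtype.ext h1
          · rintro rfl; exact ⟨rfl, by trivial, hadj⟩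
        rw [Finset.sum_congr rfl (fun e _ => this e), Finset.sum_ite_eq' Finset.univ]
        simp [Matrix.blockDiagonal_apply, SimpleGraph.lapMatrix, SimpleGraph.degMatrix,
          SimpleGraph.adjMatrix, Matrix.diagonal_apply_ne _ hvw, hadj]
      · have : ∀ e : G.edgeSet,
            (if ((e : Sym2 V) = s(v,w) ∧ i = i ∧ (mono G p i).Adj v w) then (-1:ℝ) else 0)
            = 0 := by
          intro e
          rw [if_neg]
          rintro ⟨-, -, h⟩; exact hadj h
        rw [Finset.sum_congr rfl (fun e _ => this e)]
        simp [Matrix.blockDiagonal_apply, SimpleGraph.lapMatrix, SimpleGraph.degMatrix,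
          SimpleGraph.adjMatrix, Matrix.diagonal_apply_ne _ hvw, hadj]
    · have : ∀ e : G.edgeSet,
          (if ((e : Sym2 V) = s(v,w) ∧ i = j ∧ (mono G p i).Adj v w) then (-1:ℝ) else 0)
          = 0 := by
        intro e
        rw [if_neg]
        rintro ⟨-, h, -⟩; exact hij h
      rw [Finset.sum_congr rfl (fun e _ => this e)]
      simp [Matrix.blockDiagonal_apply, hij]

end AuxD2
end AuxD2
noncomputable section AuxF
set_option linter.unusedSectionVars false
open Polynomial Filter

lemma ev_ne (b : ℝ) : ∀ᶠ ε in nhdsWithin (0:ℝ) (Set.Ioi 0), ε ≠ b := by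
  by_cases hb : b = 0
  · subst hb
    filter_upwards [self_mem_nhdsWithin] with ε hε
    exact ne_of_gt hε
  · have h : ∀ᶠ ε in nhds (0:ℝ), ε ≠ b := by
    -- {x | x ≠ b} is open and contains 0
      have : IsOpen {x : ℝ | x ≠ b} := isOpen_ne
      exact this.eventually_mem (by simpa using Ne.symm hb)
    exact h.filter_mono nhdsWithin_le_nhds

lemma ev_notmem_finite {S : Set ℝ} (hS : S.Finite) :
    ∀ᶠ ε in nhdsWithin (0:ℝ) (Set.Ioi 0), ε ∉ S := by
  classical
  have h : ∀ᶠ ε in nhdsWithin (0:ℝ) (Set.Ioi 0), ∀ b ∈ hS.toFinset, ε ≠ b := by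
    rw [Filter.eventually_all_finset]
    intro b _
    exact ev_ne b
  filter_upwards [h] with ε hε hmem
  exact hε ε (hS.mem_toFinset.mpr hmem) rfl

lemma lin_ne_eventually (x a : ℝ) (ha : a ≠ 0) :
    ∀ᶠ ε in nhdsWithin (0:ℝ) (Set.Ioi 0), x + ε * a ≠ 0 := by
  filter_upwards [ev_ne (-x / a)] with ε hε h0
  apply hε
  field_simp
  linarith

lemma quad_ne_eventually (x y a b : ℝ) (hab : a^2 ≠ b^2) :
    ∀ᶠ ε in nhdsWithin (0:ℝ) (Set.Ioi 0), (x + ε * a)^2 ≠ (y + ε * b)^2 := by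
  set P : Polynomial ℝ := C (a^2 - b^2) * X^2 + C (2*(x*a - y*b)) * X + C (x^2 - y^2) with hPdef
  have hcoeff : P.coeff 2 = a^2 - b^2 := by
    rw [hPdef]
    simp only [coeff_add, coeff_C_mul, coeff_X_pow, coeff_C]
    norm_num [Polynomial.coeff_X]
  have hP : P ≠ 0 := by
    intro h0
    apply hab
    have h2 : P.coeff 2 = 0 := by rw [h0]; simp
    rw [hcoeff] at h2
    exact sub_eq_zero.mp h2
  have hfin := Polynomial.finite_setOf_isRoot hP
  filter_upwards [ev_notmem_finite hfin] with ε hε heq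
  apply hε
  show P.IsRoot ε
  simp only [Polynomial.IsRoot.def, hPdef, eval_add, eval_mul, eval_C, eval_pow, eval_X]
  linear_combination heq

lemma abs_lt_eventually (x y a b : ℝ) (h : |y| < |x|) :
    ∀ᶠ ε in nhdsWithin (0:ℝ) (Set.Ioi 0), |y + ε * b| < |x + ε * a| := by
  have hcont : ∀ u v : ℝ, ContinuousAt (fun ε : ℝ => |u + ε * v|) 0 :=
    fun u v => ((continuous_const.add (continuous_id.mul continuous_const)).abs).continuousAt
  have := ContinuousAt.eventually_lt (hcont y b) (hcont x a) (by simpa using h)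
  exact this.filter_mono nhdsWithin_le_nhds

variable {V : Type*} [Fintype V] [DecidableEq V]

lemma exists_inj_real : ∃ c : V → ℝ, Function.Injective c := by
  refine ⟨fun v => ((Fintype.equivFin V v : ℕ) : ℝ), ?_⟩
  intro a b h
  apply (Fintype.equivFin V).injective
  exact Fin.ext (Nat.cast_injective h)

lemma pow3_injective : Function.Injective (fun n : ℕ => (3:ℝ)^n) := by
  have : StrictMono (fun n : ℕ => (3:ℝ)^n) :=
    fun a b hab => pow_lt_pow_right₀ (by norm_num) hab
  exact this.injective

lemma exists_good_q {m : ℕ} (hm : 0 < m) {G : SimpleGraph V} {p : V → Fin (m+1) → ℝ}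
    (hp : IsLinfPos G p) :
    ∃ q : V → Fin m → ℝ, IsLinfPos G q ∧
      ∀ (j : Fin m) (v w : V), (mono G p j.castSucc).Adj v w → (mono G q j).Adj v w := by
  obtain ⟨c, hc⟩ := exists_inj_real (V := V)
  -- the perturbed difference along coordinate j
  set qd : ℝ → V → V → Fin m → ℝ :=
    fun ε v w j => (p v j.castSucc - p w j.castSucc) + ε * (3^(j:ℕ) * (c v - c w)) with hqd
  have main : ∀ᶠ ε in nhdsWithin (0:ℝ) (Set.Ioi 0), ∀ v w : V, G.Adj v w →
      (∀ j : Fin m, qd ε v w j ≠ 0) ∧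
      (∀ j k : Fin m, j ≠ k → |qd ε v w j| ≠ |qd ε v w k|) ∧
      (∀ j : Fin m, (∀ i : Fin (m+1), i ≠ j.castSucc →
          |p v i - p w i| < |p v j.castSucc - p w j.castSucc|) →
        ∀ k : Fin m, k ≠ j → |qd ε v w k| < |qd ε v w j|) := by
    rw [eventually_all]
    intro v
    rw [eventually_all]
    intro w
    by_cases hadj : G.Adj v w
    · have hδ : c v - c w ≠ 0 := sub_ne_zero.mpr (hc.ne hadj.ne)
      have E1 : ∀ᶠ ε in nhdsWithin (0:ℝ) (Set.Ioi 0), ∀ j : Fin m, qd ε v w j ≠ 0 := by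
        rw [eventually_all]
        intro j
        exact lin_ne_eventually _ _ (mul_ne_zero (pow_ne_zero _ (by norm_num)) hδ)
      have E2 : ∀ᶠ ε in nhdsWithin (0:ℝ) (Set.Ioi 0),
          ∀ j k : Fin m, j ≠ k → |qd ε v w j| ≠ |qd ε v w k| := by
        rw [eventually_all]
        intro j
        rw [eventually_all]
        intro k
        by_cases hjk : j = k
        · exact Eventually.of_forall (fun ε h => absurd hjk h)
        · have hab : ((3:ℝ)^(j:ℕ) * (c v - c w))^2 ≠ ((3:ℝ)^(k:ℕ) * (c v - c w))^2 := by
            intro h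
            apply hjk
            have h3 : ((3:ℝ)^(j:ℕ))^2 = ((3:ℝ)^(k:ℕ))^2 := by
              have hδ2 : (c v - c w)^2 ≠ 0 := pow_ne_zero _ hδ
              have h' : ((3:ℝ)^(j:ℕ))^2 * (c v - c w)^2
                  = ((3:ℝ)^(k:ℕ))^2 * (c v - c w)^2 := by
                rw [← mul_pow, ← mul_pow, h]
              exact mul_right_cancel₀ hδ2 h'
            have : (3:ℝ)^(2*(j:ℕ)) = (3:ℝ)^(2*(k:ℕ)) := by
              rw [pow_mul, pow_mul]
              rw [← pow_mul, ← pow_mul] at h3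
              rw [mul_comm ((j:ℕ)) 2, mul_comm ((k:ℕ)) 2] at h3
              rw [pow_mul, pow_mul]at h3
              exact h3
            have := pow3_injective this
            exact Fin.ext (by omega)
          have := quad_ne_eventually (p v j.castSucc - p w j.castSucc)
            (p v k.castSucc - p w k.castSucc) _ _ hab
          filter_upwards [this] with ε hε _ habs
          apply hε
          rw [← sq_abs (qd ε v w j), ← sq_abs (qd ε v w k)] at *
          rw [habs]
      have E3 : ∀ᶠ ε in nhdsWithin (0:ℝ) (Set.Ioi 0),
          ∀ j : Fin m, (∀ i : Fin (m+1), i ≠ j.castSucc →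
              |p v i - p w i| < |p v j.castSucc - p w j.castSucc|) →
            ∀ k : Fin m, k ≠ j → |qd ε v w k| < |qd ε v w j| := by
        rw [eventually_all]
        intro j
        by_cases hH : ∀ i : Fin (m+1), i ≠ j.castSucc →
            |p v i - p w i| < |p v j.castSucc - p w j.castSucc|
        · have : ∀ᶠ ε in nhdsWithin (0:ℝ) (Set.Ioi 0),
              ∀ k : Fin m, k ≠ j → |qd ε v w k| < |qd ε v w j| := by
            rw [eventually_all]
            intro k
            by_cases hkj : k = j
            · exact Eventually.of_forall (fun ε h => absurd hkj h)
            · have hlt : |p v k.castSucc - p w k.castSucc|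
                  < |p v j.castSucc - p w j.castSucc| :=
                hH k.castSucc (fun h => hkj (Fin.castSucc_injective m h))
              have := abs_lt_eventually (p v j.castSucc - p w j.castSucc)
                (p v k.castSucc - p w k.castSucc)
                ((3:ℝ)^(j:ℕ) * (c v - c w)) ((3:ℝ)^(k:ℕ) * (c v - c w)) hlt
              filter_upwards [this] with ε hε _
              exact hε
          filter_upwards [this] with ε hε _
          exact hε
        · exact Eventually.of_forall (fun ε h => absurd h hH)
      filter_upwards [E1, E2, E3] with ε h1 h2 h3 _
      exact ⟨h1, h2, h3⟩
    · exact Eventually.of_forall (fun ε h => absurd h hadj)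
  obtain ⟨ε, hεgood⟩ := main.exists
  refine ⟨fun v j => p v j.castSucc + ε * (3^(j:ℕ) * c v), ?_, ?_⟩
  · -- IsLinfPos
    intro v w hadj
    obtain ⟨h1, h2, h3⟩ := hεgood v w hadj
    have hqdiff : ∀ j : Fin m,
        (p v j.castSucc + ε * (3^(j:ℕ) * c v)) - (p w j.castSucc + ε * (3^(j:ℕ) * c w))
          = qd ε v w j := by
      intro j; rw [hqd]; ring
    constructor
    · intro heq
      apply h1 ⟨0, hm⟩
      rw [← hqdiff ⟨0, hm⟩, sub_eq_zero]
      exact congrFun heq ⟨0, hm⟩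
    · -- unique max
      obtain ⟨i, -, hi⟩ := Finset.exists_max_image Finset.univ
        (fun j : Fin m => |qd ε v w j|) ⟨⟨0, hm⟩, Finset.mem_univ _⟩
      refine ⟨i, fun j hji => ?_⟩
      rw [hqdiff, hqdiff]
      exact lt_of_le_of_ne (hi j (Finset.mem_univ _)) (h2 j i hji)
  · -- mono inclusion
    intro j v w hmadj
    have hadj : G.Adj v w := hmadj.1
    obtain ⟨h1, h2, h3⟩ := hεgood v w hadj
    obtain ⟨hne, i₀, hi₀⟩ := hp hadj
    have hi₀j : i₀ = j.castSucc := by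
      by_contra hne'
      exact absurd (hmadj.2 i₀) (not_le.mpr (hi₀ _ (fun h => hne' h.symm)))
    have hH : ∀ i : Fin (m+1), i ≠ j.castSucc →
        |p v i - p w i| < |p v j.castSucc - p w j.castSucc| := by
      intro i hi
      rw [← hi₀j] at hi ⊢
      exact hi₀ i hi
    have hstrict := h3 j hH
    have hqdiff : ∀ k : Fin m,
        (p v k.castSucc + ε * (3^(k:ℕ) * c v)) - (p w k.castSucc + ε * (3^(k:ℕ) * c w))
          = qd ε v w k := by
      intro k; rw [hqd]; ring
    refine ⟨hadj, fun k => ?_⟩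
    rw [hqdiff, hqdiff]
    by_cases hkj : k = j
    · subst hkj; exact le_refl _
    · exact le_of_lt (hstrict k hkj)

lemma exists_linf_pos (m : ℕ) (hm : 0 < m) (G : SimpleGraph V) :
    ∃ q : V → Fin m → ℝ, IsLinfPos G q := by
  obtain ⟨c, hc⟩ := exists_inj_real (V := V)
  refine ⟨fun v j => 3^(j:ℕ) * c v, ?_⟩
  intro v w hadj
  have hδ : c v - c w ≠ 0 := sub_ne_zero.mpr (hc.ne hadj.ne)
  constructor
  · intro heq
    apply hδ
    have h0 : (3:ℝ)^(((⟨0, hm⟩ : Fin m)):ℕ) * c v = (3:ℝ)^(((⟨0, hm⟩ : Fin m)):ℕ) * c w :=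
      congrFun heq ⟨0, hm⟩
    have hcc := mul_left_cancel₀
      (show ((3:ℝ)^(((⟨0, hm⟩ : Fin m)):ℕ)) ≠ 0 by positivity) h0
    linarith
  · refine ⟨⟨m-1, by omega⟩, fun j hj => ?_⟩
    have hdiff : ∀ k : Fin m, (3:ℝ)^(k:ℕ) * c v - 3^(k:ℕ) * c w = 3^(k:ℕ) * (c v - c w) := by
      intro k; ring
    rw [hdiff, hdiff, abs_mul, abs_mul]
    have hjlt : (j:ℕ) < m - 1 := by
      have := j.2
      rcases Nat.lt_or_ge (j:ℕ) (m-1) with h | h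
      · exact h
      · exfalso; apply hj; apply Fin.ext; show (j:ℕ) = m - 1; omega
    have : |(3:ℝ)^(j:ℕ)| < |(3:ℝ)^(m-1)| := by
      rw [abs_of_pos (by positivity), abs_of_pos (by positivity)]
      exact pow_lt_pow_right₀ (by norm_num) hjlt
    have habs : 0 < |c v - c w| := abs_pos.mpr hδ
    calc |(3:ℝ)^(j:ℕ)| * |c v - c w| < |(3:ℝ)^(m-1)| * |c v - c w| := by
          exact mul_lt_mul_of_pos_right this habs
      _ = _ := rfl

end AuxF

noncomputable section AuxG
set_option linter.unusedSectionVars false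
open Polynomial AuxD AuxD2

lemma conjTranspose_eq_transpose_real {α β : Type*} (A : Matrix α β ℝ) : Aᴴ = Aᵀ := by
  ext i j
  simp [Matrix.conjTranspose_apply, Matrix.transpose_apply]

variable {V : Type*} [Fintype V] [DecidableEq V]

lemma fLap_posSemidef {d : ℕ} (G : SimpleGraph V) (p : V → Fin d → ℝ) :
    (fLap G p).PosSemidef := by
  rw [fLap, ← conjTranspose_eq_transpose_real]
  exact Matrix.posSemidef_conjTranspose_mul_self _

lemma lap_sub_posSemidef {G1 G2 : SimpleGraph V} (h : ∀ v w, G1.Adj v w → G2.Adj v w) :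
    (G2.lapMatrix ℝ - G1.lapMatrix ℝ).PosSemidef := by
  rw [Matrix.posSemidef_iff_dotProduct_mulVec]
  constructor
  · exact ((SimpleGraph.posSemidef_lapMatrix ℝ G2).1).sub
      ((SimpleGraph.posSemidef_lapMatrix ℝ G1).1)
  · intro x
    rw [star_trivial, Matrix.sub_mulVec, dotProduct_sub]
    have e2 : x ⬝ᵥ (G2.lapMatrix ℝ *ᵥ x)
        = (∑ i : V, ∑ j : V, if G2.Adj i j then ((x i : ℝ) - x j)^2 else 0) / 2 := by
      rw [← Matrix.toLinearMap₂'_apply', SimpleGraph.lapMatrix_toLinearMap₂']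
    have e1 : x ⬝ᵥ (G1.lapMatrix ℝ *ᵥ x)
        = (∑ i : V, ∑ j : V, if G1.Adj i j then ((x i : ℝ) - x j)^2 else 0) / 2 := by
      rw [← Matrix.toLinearMap₂'_apply', SimpleGraph.lapMatrix_toLinearMap₂']
    rw [e1, e2, sub_nonneg]
    have hsum : (∑ i : V, ∑ j : V, if G1.Adj i j then ((x i : ℝ) - x j)^2 else 0)
        ≤ ∑ i : V, ∑ j : V, if G2.Adj i j then ((x i : ℝ) - x j)^2 else 0 := by
      apply Finset.sum_le_sum
      intro i _
      apply Finset.sum_le_sum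
      intro j _
      by_cases h1 : G1.Adj i j
      · rw [if_pos h1, if_pos (h _ _ h1)]
      · rw [if_neg h1]
        by_cases h2 : G2.Adj i j
        · rw [if_pos h2]; positivity
        · rw [if_neg h2]
    linarith

/-- transfer of the Weyl counting lemma to charpoly root multisets -/
lemma countP_roots_le_of_psd {m : Type*} [Fintype m] [DecidableEq m]
    {A B : Matrix m m ℝ} (hA : A.IsHermitian) (hB : B.IsHermitian)
    (hBA : (B - A).PosSemidef) (t : ℝ) :
    Multiset.countP (fun x => x < t) B.charpoly.roots
      ≤ Multiset.countP (fun x => x < t) A.charpoly.roots := by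
  rw [roots_charpoly_isHermitian hA, roots_charpoly_isHermitian hB,
    Multiset.countP_map, Multiset.countP_map]
  have hc : ∀ (f : m → ℝ),
      Multiset.card (Multiset.filter (fun a => f a < t) Finset.univ.val)
        = (Finset.univ.filter fun i => f i < t).card := by
    intro f
    rw [Finset.card, Finset.filter_val]
  rw [hc, hc]
  exact card_eigen_lt_mono hA hB hBA t

lemma countP_sortList (s : Multiset ℝ) (t : ℝ) :
    (s.sort (· ≤ ·)).countP (fun x => decide (x < t)) = Multiset.countP (fun x => x < t) s := by
  conv_rhs => rw [← Multiset.sort_eq (s := s) (r := (· ≤ ·))]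
  rfl

lemma eigval_nonneg_of_psd {m : Type*} [Fintype m] [DecidableEq m]
    {A : Matrix m m ℝ} (hA : A.PosSemidef) (k : ℕ) : 0 ≤ eigval A k := by
  unfold eigval sortedEigs
  by_cases hk : k - 1 < (A.charpoly.roots.sort (· ≤ ·)).length
  · have hmem : (A.charpoly.roots.sort (· ≤ ·)).getD (k-1) 0
        ∈ (A.charpoly.roots.sort (· ≤ ·)) := by
      rw [List.getD_eq_getElem _ _ hk]
      exact List.getElem_mem _
    replace hmem := (Multiset.mem_sort _).mp hmem
    exact roots_charpoly_nonneg hA hmem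
  · rw [List.getD_eq_default _ _ (not_lt.mp hk)]

lemma charpoly_splits {m : Type*} [Fintype m] [DecidableEq m]
    {A : Matrix m m ℝ} (hA : A.IsHermitian) : A.charpoly.Splits := by
  rw [charpoly_eq_prod_eigenvalues hA]
  exact Polynomial.Splits.prod (fun i _ => Polynomial.Splits.X_sub_C _)

lemma eigval_le_trace_of_psd {m : Type*} [Fintype m] [DecidableEq m]
    {A : Matrix m m ℝ} (hA : A.PosSemidef) (k : ℕ) : eigval A k ≤ A.trace := by
  have htr : A.trace = A.charpoly.roots.sum :=
    Matrix.trace_eq_sum_roots_charpoly_of_splits (charpoly_splits hA.1)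
  have hnn : ∀ x ∈ A.charpoly.roots, (0:ℝ) ≤ x := fun x hx => roots_charpoly_nonneg hA hx
  unfold eigval sortedEigs
  by_cases hk : k - 1 < (A.charpoly.roots.sort (· ≤ ·)).length
  · have hmem : (A.charpoly.roots.sort (· ≤ ·)).getD (k-1) 0
        ∈ (A.charpoly.roots.sort (· ≤ ·)) := by
      rw [List.getD_eq_getElem _ _ hk]
      exact List.getElem_mem _
    replace hmem := (Multiset.mem_sort _).mp hmem
    rw [htr]
    exact Multiset.single_le_sum hnn _ hmem
  · rw [List.getD_eq_default _ _ (not_lt.mp hk), htr]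
    exact Multiset.sum_nonneg hnn

lemma rig_sq_le_one {d : ℕ} (G : SimpleGraph V) (p : V → Fin d → ℝ)
    (e : G.edgeSet) (vi : V × Fin d) : (rigidity G p e vi)^2 ≤ 1 := by
  rw [rigidity]
  by_cases hv : vi.1 ∈ (e : Sym2 V)
  · rw [dif_pos hv]
    by_cases hadj : (mono G p vi.2).Adj vi.1 (Sym2.Mem.other hv)
    · rw [if_pos hadj]
      set x := p vi.1 vi.2 - p (Sym2.Mem.other hv) vi.2
      rcases lt_trichotomy x 0 with h | h | h
      · rw [Real.sign_of_neg h]; norm_num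
      · rw [h, Real.sign_zero]; norm_num
      · rw [Real.sign_of_pos h]; norm_num
    · rw [if_neg hadj]; norm_num
  · rw [dif_neg hv]; norm_num

lemma trace_fLap_le {d : ℕ} (G : SimpleGraph V) (p : V → Fin d → ℝ) :
    (fLap G p).trace ≤ (Fintype.card (V × Fin d) : ℝ) * (Fintype.card G.edgeSet : ℝ) := by
  rw [Matrix.trace]
  have hdiag : ∀ vi : V × Fin d, (fLap G p).diag vi ≤ (Fintype.card G.edgeSet : ℝ) := by
    intro vi
    rw [Matrix.diag_apply, fLap, Matrix.mul_apply]
    calc ∑ e : G.edgeSet, (rigidity G p)ᵀ vi e * rigidity G p e vi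
        = ∑ e : G.edgeSet, (rigidity G p e vi)^2 := by
          apply Finset.sum_congr rfl
          intro e _
          rw [Matrix.transpose_apply]; ring
      _ ≤ ∑ _e : G.edgeSet, (1:ℝ) := Finset.sum_le_sum (fun e _ => rig_sq_le_one G p e vi)
      _ = (Fintype.card G.edgeSet : ℝ) := by simp
  calc ∑ vi, (fLap G p).diag vi ≤ ∑ _vi : V × Fin d, (Fintype.card G.edgeSet : ℝ) :=
        Finset.sum_le_sum (fun vi _ => hdiag vi)
    _ = _ := by simp [mul_comm]

lemma zero_mem_roots_lap [Nonempty V] (H : SimpleGraph V) :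
    (0:ℝ) ∈ (H.lapMatrix ℝ).charpoly.roots := by
  rw [Polynomial.mem_roots']
  refine ⟨(Matrix.charpoly_monic _).ne_zero, ?_⟩
  have hdet : (H.lapMatrix ℝ).det = 0 := by
    rw [← Matrix.exists_mulVec_eq_zero_iff]
    refine ⟨fun _ => 1, ?_, SimpleGraph.lapMatrix_mulVec_const_eq_zero H⟩
    intro h0
    have := congrFun h0 (Classical.arbitrary V)
    simpa using this
  have hcoeff : (H.lapMatrix ℝ).charpoly.coeff 0 = 0 := by
    have := Matrix.det_eq_sign_charpoly_coeff (H.lapMatrix ℝ)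
    rw [hdet] at this
    have hne : ((-1:ℝ))^(Fintype.card V) ≠ 0 := by
      apply pow_ne_zero; norm_num
    field_simp at this
    exact (mul_eq_zero.mp this.symm).resolve_left hne
  rw [Polynomial.IsRoot.def, ← Polynomial.coeff_zero_eq_eval_zero]
  exact hcoeff

lemma length_sortedEigs_psd {m : Type*} [Fintype m] [DecidableEq m]
    {A : Matrix m m ℝ} (hA : A.IsHermitian) :
    (sortedEigs A).length = Fintype.card m := by
  rw [sortedEigs, Multiset.length_sort]
  exact card_roots_charpoly_isHermitian hA

/-- The key spectral comparison. -/
lemma key_compare {m : ℕ} (hm : 0 < m) {G : SimpleGraph V} {p : V → Fin (m+1) → ℝ}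
    {q : V → Fin m → ℝ} (hp : IsLinfPos G p) (hq : IsLinfPos G q)
    (hmono : ∀ (j : Fin m) (v w : V), (mono G p j.castSucc).Adj v w → (mono G q j).Adj v w)
    (hV : m + 2 ≤ Fintype.card V) :
    eigval (fLap G p) (m + 2) ≤ eigval (fLap G q) (m + 1) := by
  have hnV : Nonempty V := by
    rw [← Fintype.card_pos_iff]; omega
  by_contra hcon
  push_neg at hcon
  set t := eigval (fLap G p) (m + 2) with ht
  have ht0 : 0 < t := lt_of_le_of_lt (eigval_nonneg_of_psd (fLap_posSemidef G q) (m+1)) hcon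
  -- lengths
  have hlenq : (sortedEigs (fLap G q)).length = Fintype.card V * m := by
    rw [length_sortedEigs_psd (fLap_posSemidef G q).1]
    simp [Fintype.card_prod, mul_comm]
  have hlenp : (sortedEigs (fLap G p)).length = Fintype.card V * (m+1) := by
    rw [length_sortedEigs_psd (fLap_posSemidef G p).1]
    simp [Fintype.card_prod, mul_comm]
  have hkq : m < (sortedEigs (fLap G q)).length := by
    rw [hlenq]
    calc m < 1 * m + 1 := by omega
      _ ≤ Fintype.card V * m := by nlinarith [hV, hm]
  have hkp : m + 1 < (sortedEigs (fLap G p)).length := by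
    rw [hlenp]
    nlinarith [hV, hm]
  -- step 1 : many small eigenvalues of fLap q
  have hq_sorted : (sortedEigs (fLap G q)).Pairwise (· ≤ ·) := Multiset.pairwise_sort _ _
  have hgetq : (sortedEigs (fLap G q)).getD m 0 < t := by
    have : eigval (fLap G q) (m+1) = (sortedEigs (fLap G q)).getD m 0 := by
      rw [eigval]; norm_num
    rw [← this]; exact hcon
  have hstep1 : m + 1 ≤ Multiset.countP (fun x => x < t) (fLap G q).charpoly.roots := by
    have := le_countP_of_sorted_getD_lt hq_sorted hkq hgetq
    rwa [sortedEigs, countP_sortList] at this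
  -- step 2 : decompose spectra
  have hspecq : (fLap G q).charpoly.roots
      = ∑ j : Fin m, ((mono G q j).lapMatrix ℝ).charpoly.roots := by
    rw [fLap_eq_blockDiagonal hq, roots_blockDiagonal]
  have hspecp : (fLap G p).charpoly.roots
      = ∑ i : Fin (m+1), ((mono G p i).lapMatrix ℝ).charpoly.roots := by
    rw [fLap_eq_blockDiagonal hp, roots_blockDiagonal]
  -- step 3 : per-block comparison
  have hblock : ∀ j : Fin m,
      Multiset.countP (fun x => x < t) ((mono G q j).lapMatrix ℝ).charpoly.roots
        ≤ Multiset.countP (fun x => x < t) ((mono G p j.castSucc).lapMatrix ℝ).charpoly.roots := by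
    intro j
    apply countP_roots_le_of_psd
      (SimpleGraph.posSemidef_lapMatrix ℝ (mono G p j.castSucc)).1
      (SimpleGraph.posSemidef_lapMatrix ℝ (mono G q j)).1
    · exact lap_sub_posSemidef (fun v w h => hmono j v w h)
  -- step 4 : count in fLap p
  have hlast : 1 ≤ Multiset.countP (fun x => x < t)
      ((mono G p (Fin.last m)).lapMatrix ℝ).charpoly.roots := by
    rw [Nat.one_le_iff_ne_zero, ← Nat.pos_iff_ne_zero, Multiset.countP_pos]
    exact ⟨0, zero_mem_roots_lap _, ht0⟩
  have hstep4 : m + 2 ≤ Multiset.countP (fun x => x < t) (fLap G p).charpoly.roots := by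
    rw [hspecp, countP_finsetSum, Fin.sum_univ_castSucc]
    have hsum : m + 1 ≤ ∑ j : Fin m,
        Multiset.countP (fun x => x < t) ((mono G p j.castSucc).lapMatrix ℝ).charpoly.roots := by
      calc m + 1 ≤ Multiset.countP (fun x => x < t) (fLap G q).charpoly.roots := hstep1
        _ = ∑ j : Fin m,
            Multiset.countP (fun x => x < t) ((mono G q j).lapMatrix ℝ).charpoly.roots := by
              rw [hspecq, countP_finsetSum]
        _ ≤ _ := Finset.sum_le_sum (fun j _ => hblock j)
    omega
  -- step 5 : contradiction
  have hp_sorted : (sortedEigs (fLap G p)).Pairwise (· ≤ ·) := Multiset.pairwise_sort _ _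
  have hfin : (sortedEigs (fLap G p)).getD (m+1) 0 < t := by
    apply sorted_getD_lt_of_le_countP hp_sorted hkp
    rw [sortedEigs, countP_sortList]
    exact hstep4
  have : t = (sortedEigs (fLap G p)).getD (m+1) 0 := by
    rw [ht, eigval]; norm_num
  rw [← this] at hfin
  exact lt_irrefl t hfin

end AuxG

/-- For `d ≥ 2` and a finite simple graph `G` with at least `d+1` vertices,
`a(G, ℓ∞^d) ≤ a(G, ℓ∞^{d−1})`. -/
theorem algConnLinf_antitone {V : Type*} [Fintype V] [DecidableEq V] {d : ℕ}
    (hd : 2 ≤ d) (G : SimpleGraph V) (hV : d + 1 ≤ Fintype.card V) :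
    algConnLinf d G ≤ algConnLinf (d - 1) G := by
  obtain ⟨m, rfl⟩ : ∃ m, d = m + 1 := ⟨d - 1, by omega⟩
  have hm : 0 < m := by omega
  have hcard : m + 2 ≤ Fintype.card V := by omega
  set Sq : Set ℝ :=
    {t : ℝ | ∃ q : V → Fin m → ℝ, IsLinfPos G q ∧ t = eigval (fLap G q) (m + 1)} with hSq
  have hL : algConnLinf (m+1) G = sSup {t : ℝ | ∃ p : V → Fin (m+1) → ℝ,
      IsLinfPos G p ∧ t = eigval (fLap G p) (m+1+1)} := rfl
  have hR : algConnLinf (m+1-1) G = sSup Sq := rfl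
  rw [hL, hR]
  have hbdd : BddAbove Sq := by
    refine ⟨(Fintype.card (V × Fin m) : ℝ) * (Fintype.card G.edgeSet : ℝ), ?_⟩
    rintro x ⟨q, hq, rfl⟩
    exact le_trans (eigval_le_trace_of_psd (fLap_posSemidef G q) _) (trace_fLap_le G q)
  apply Real.sSup_le
  · rintro x ⟨p, hp, rfl⟩
    calc eigval (fLap G p) (m + 1 + 1)
        ≤ eigval (fLap G (Classical.choose (exists_good_q hm hp))) (m + 1) :=
          key_compare hm hp (Classical.choose_spec (exists_good_q hm hp)).1
            (Classical.choose_spec (exists_good_q hm hp)).2 hcard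
      _ ≤ sSup Sq := le_csSup hbdd
          ⟨Classical.choose (exists_good_q hm hp),
            (Classical.choose_spec (exists_good_q hm hp)).1, rfl⟩
  · obtain ⟨q0, hq0⟩ := exists_linf_pos m hm G
    exact le_trans (eigval_nonneg_of_psd (fLap_posSemidef G q0) (m+1))
      (le_csSup hbdd ⟨q0, hq0, rfl⟩)
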